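/- For all integers k ≥ m ≥ 1, lim_{T→∞} (1/(1 − e^{−T})) · ∫_0^T C(k−1, m−1) · e^{−y} · e^{−my/2} · (1 − e^{−y/2})^{k−m} dy = m(m+1) · B(k, 3) = 2m(m+1) / (k(k+1)(k+2)), where C(k−1,m−1) is a binomial coefficient and B(a,b) = Γ(a)Γ(b)/Γ(a+b) is the Beta function. -/

import Mathlib

open Filter Topology MeasureTheory Set

lemma factProd (a b : ℕ) :
    (a.factorial : ℂ) * ∏ j ∈ Finset.range (b + 1), ((a : ℂ) + 1 + j) =
      ((a + b + 1).factorial : ℂ) := by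
  induction b with
  | zero =>
    have : a + 0 + 1 = a + 1 := by omega
    rw [this, Nat.factorial_succ]
    simp; ring
  | succ b ih =>
    have h2 : (a + (b + 1) + 1).factorial = (a + 1 + (b + 1)) * (a + b + 1).factorial := by
      have h3 : a + (b + 1) + 1 = (a + b + 1) + 1 := by omega
      rw [h3, Nat.factorial_succ]
      congr 1; omega
    rw [Finset.prod_range_succ, ← mul_assoc, ih, h2]
    push_cast; ring

lemma betaNat (a b : ℕ) :
    ∫ x in (0:ℝ)..1, x ^ a * (1 - x) ^ b =
      (a.factorial : ℝ) * b.factorial / (a + b + 1).factorial := by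
  have hu : 0 < Complex.re ((a : ℂ) + 1) := by simp; positivity
  have h := Complex.betaIntegral_eval_nat_add_one_right hu b
  rw [Complex.betaIntegral] at h
  have heq : ∀ x : ℝ, ((x : ℂ)) ^ ((a : ℂ) + 1 - 1) * ((1 : ℂ) - x) ^ ((b : ℂ) + 1 - 1)
      = ((x ^ a * (1 - x) ^ b : ℝ) : ℂ) := by
    intro x
    rw [add_sub_cancel_right, add_sub_cancel_right, Complex.cpow_natCast,
      Complex.cpow_natCast]
    push_cast; ring
  simp only [heq] at h
  rw [intervalIntegral.integral_ofReal] at h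
  have hne : (∏ j ∈ Finset.range (b + 1), ((a : ℂ) + 1 + j)) ≠ 0 := by
    apply Finset.prod_ne_zero_iff.2
    intro j _
    have h4 : (0:ℝ) < (a:ℝ) + 1 + j := by positivity
    intro hc
    have := congrArg Complex.re hc
    simp at this; linarith
  have hfact : ((a + b + 1).factorial : ℂ) ≠ 0 :=
    Nat.cast_ne_zero.2 (Nat.factorial_ne_zero _)
  have key : ((∫ x in (0:ℝ)..1, x ^ a * (1 - x) ^ b : ℝ) : ℂ)
      = ((a.factorial : ℝ) * b.factorial / (a + b + 1).factorial : ℝ) := by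
    rw [h]
    push_cast
    rw [div_eq_div_iff hne hfact]
    linear_combination (-(b.factorial : ℂ)) * factProd a b
  exact_mod_cast key

lemma keyIntegral (a n : ℕ) :
    IntegrableOn (fun y => Real.exp (-y) * Real.exp (-((a+1:ℕ):ℝ) * y / 2) *
        (1 - Real.exp (-y/2)) ^ n) (Ioi (0:ℝ)) ∧
      ∫ y in Ioi (0:ℝ), Real.exp (-y) * Real.exp (-((a+1:ℕ):ℝ) * y / 2) *
          (1 - Real.exp (-y/2)) ^ n =
        2 * (((a+2).factorial : ℝ) * n.factorial / (a+n+3).factorial) := by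
  have hderiv : ∀ x ∈ Ioi (0:ℝ), HasDerivWithinAt (fun y => Real.exp (-y/2))
      (Real.exp (-x/2) * (-(1/2))) (Ioi 0) x := by
    intro x _
    have hin : HasDerivAt (fun y : ℝ => -y/2) (-(1/2)) x := by
      have h0 : HasDerivAt (fun y : ℝ => -y/2) (-(1:ℝ)/2) x := (hasDerivAt_id x).neg.div_const 2
      convert h0 using 1
      norm_num
    exact hin.exp.hasDerivWithinAt
  have hinj : InjOn (fun y => Real.exp (-y/2)) (Ioi (0:ℝ)) := by
    intro x _ y _ hxy
    have := Real.exp_injective hxy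
    linarith
  have himg : (fun y => Real.exp (-y/2)) '' Ioi (0:ℝ) = Ioo 0 1 := by
    ext x
    constructor
    · rintro ⟨y, hy, rfl⟩
      exact ⟨Real.exp_pos _, Real.exp_lt_one_iff.2 (by simp at hy ⊢; linarith)⟩
    · rintro ⟨hx0, hx1⟩
      refine ⟨-2 * Real.log x, ?_, ?_⟩
      · have := Real.log_neg hx0 hx1
        simp only [mem_Ioi]; linarith
      · show Real.exp (-(-2 * Real.log x) / 2) = x
        have h5 : -(-2 * Real.log x) / 2 = Real.log x := by ring
        rw [h5, Real.exp_log hx0]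
  have hptwise : ∀ y : ℝ, |Real.exp (-y/2) * (-(1/2))| •
      (2 * ((Real.exp (-y/2)) ^ (a+2) * (1 - Real.exp (-y/2)) ^ n)) =
      Real.exp (-y) * Real.exp (-((a+1:ℕ):ℝ) * y / 2) * (1 - Real.exp (-y/2)) ^ n := by
    intro y
    have habs : |Real.exp (-y/2) * (-(1/2))| = Real.exp (-y/2) * (1/2) := by
      rw [abs_mul, abs_of_nonneg (Real.exp_pos _).le]; norm_num
    rw [habs, smul_eq_mul, ← Real.exp_nat_mul]
    have h1 : Real.exp (-y) * Real.exp (-((a+1:ℕ):ℝ) * y / 2)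
        = Real.exp (-y/2) * Real.exp (((a+2:ℕ):ℝ) * (-y/2)) := by
      rw [← Real.exp_add, ← Real.exp_add]; congr 1; push_cast; ring
    rw [h1]; ring
  have hgb : Continuous (fun x : ℝ => 2 * (x ^ (a+2) * (1 - x) ^ n)) := by continuity
  have hgb_int : IntegrableOn (fun x : ℝ => 2 * (x ^ (a+2) * (1 - x) ^ n)) (Ioo 0 1) :=
    (hgb.integrableOn_Icc (a := 0) (b := 1)).mono_set Ioo_subset_Icc_self
  have hiff := integrableOn_image_iff_integrableOn_abs_deriv_smul measurableSet_Ioi hderiv hinj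
    (fun x : ℝ => 2 * (x ^ (a+2) * (1 - x) ^ n))
  rw [himg] at hiff
  have hfun : (fun x => |Real.exp (-x/2) * (-(1/2))| •
      (2 * ((Real.exp (-x/2)) ^ (a+2) * (1 - Real.exp (-x/2)) ^ n)))
      = fun y => Real.exp (-y) * Real.exp (-((a+1:ℕ):ℝ) * y / 2) *
        (1 - Real.exp (-y/2)) ^ n := funext hptwise
  have hint : IntegrableOn (fun y => Real.exp (-y) * Real.exp (-((a+1:ℕ):ℝ) * y / 2) *
      (1 - Real.exp (-y/2)) ^ n) (Ioi (0:ℝ)) := by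
    have := hiff.1 hgb_int
    rwa [hfun] at this
  refine ⟨hint, ?_⟩
  have hsub := integral_image_eq_integral_abs_deriv_smul measurableSet_Ioi hderiv hinj
    (fun x : ℝ => 2 * (x ^ (a+2) * (1 - x) ^ n))
  rw [himg, hfun] at hsub
  rw [← hsub]
  rw [← integral_Ioc_eq_integral_Ioo, ← intervalIntegral.integral_of_le zero_le_one,
    intervalIntegral.integral_const_mul, betaNat]
  have : a + 2 + n + 1 = a + n + 3 := by omega
  rw [this]

/-- In the m-Yule model with species rate 1/2 and genus rate 1, the probability
that a uniformly chosen genus at time `T` has exactly `k` species converges, as `T → ∞`, to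
`m(m+1)·B(k,3) = 2m(m+1)/(k(k+1)(k+2))`, where `B(a,b) = Γ(a)Γ(b)/Γ(a+b)`. -/
theorem yule_genus_size_limit (m k : ℕ) (hm : 1 ≤ m) (hk : m ≤ k) :
    Tendsto
        (fun T : ℝ =>
          (1 / (1 - Real.exp (-T))) *
            ∫ y in (0 : ℝ)..T,
              ((k - 1).choose (m - 1) : ℝ) *
                (Real.exp (-y) * Real.exp (-(m : ℝ) * y / 2) *
                  (1 - Real.exp (-y / 2)) ^ (k - m)))
        atTop
        (𝓝 ((m : ℝ) * ((m : ℝ) + 1) *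
          (Real.Gamma (k : ℝ) * Real.Gamma 3 / Real.Gamma ((k : ℝ) + 3)))) ∧
      (m : ℝ) * ((m : ℝ) + 1) *
          (Real.Gamma (k : ℝ) * Real.Gamma 3 / Real.Gamma ((k : ℝ) + 3)) =
        2 * (m : ℝ) * ((m : ℝ) + 1) / ((k : ℝ) * ((k : ℝ) + 1) * ((k : ℝ) + 2)) := by
  obtain ⟨a, rfl⟩ : ∃ a, m = a + 1 := ⟨m - 1, by omega⟩
  obtain ⟨n, rfl⟩ : ∃ n, k = (a + 1) + n := ⟨k - (a + 1), by omega⟩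
  clear hm hk
  -- Gamma values
  have hg1 : Real.Gamma ((a + 1 + n : ℕ) : ℝ) = ((a + n).factorial : ℝ) := by
    have h : ((a + 1 + n : ℕ) : ℝ) = ((a + n : ℕ) : ℝ) + 1 := by push_cast; ring
    rw [h, Real.Gamma_nat_eq_factorial]
  have hg3 : Real.Gamma 3 = 2 := by
    have h : (3 : ℝ) = ((2 : ℕ) : ℝ) + 1 := by norm_num
    rw [h, Real.Gamma_nat_eq_factorial]; norm_num
  have hg2 : Real.Gamma (((a + 1 + n : ℕ) : ℝ) + 3) = ((a + n + 3).factorial : ℝ) := by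
    have h : ((a + 1 + n : ℕ) : ℝ) + 3 = ((a + n + 3 : ℕ) : ℝ) + 1 := by push_cast; ring
    rw [h, Real.Gamma_nat_eq_factorial]
  -- binomial coefficient
  have hC : ((a + 1 + n - 1).choose (a + 1 - 1) : ℝ) * a.factorial * n.factorial
      = ((a + n).factorial : ℝ) := by
    have h1 : a + 1 + n - 1 = a + n := by omega
    have h2 : a + 1 - 1 = a := by omega
    rw [h1, h2]
    have := Nat.choose_mul_factorial_mul_factorial (Nat.le_add_right a n)
    rw [Nat.add_sub_cancel_left] at this
    exact_mod_cast congrArg (Nat.cast : ℕ → ℝ) this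
  -- factorial expansions
  have hfac1 : ((a + 2).factorial : ℝ)
      = ((a : ℝ) + 2) * ((a : ℝ) + 1) * (a.factorial : ℝ) := by
    have h : (a + 2).factorial = (a + 2) * ((a + 1) * a.factorial) := by
      rw [show a + 2 = (a + 1) + 1 by omega, Nat.factorial_succ, Nat.factorial_succ]
    rw [h]; push_cast; ring
  have hfac2 : ((a + n + 3).factorial : ℝ)
      = ((a : ℝ) + (n : ℝ) + 3) * ((a : ℝ) + (n : ℝ) + 2) * ((a : ℝ) + (n : ℝ) + 1)
        * ((a + n).factorial : ℝ) := by
    have h : (a + n + 3).factorial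
        = (a + n + 3) * ((a + n + 2) * ((a + n + 1) * (a + n).factorial)) := by
      rw [show a + n + 3 = (a + n + 2) + 1 by omega, Nat.factorial_succ]
      rw [show a + n + 2 = (a + n + 1) + 1 by omega, Nat.factorial_succ]
      rw [show a + n + 1 = (a + n) + 1 by omega, Nat.factorial_succ]
    rw [h]; push_cast; ring
  have hfane : ∀ j : ℕ, (j.factorial : ℝ) ≠ 0 :=
    fun j => Nat.cast_ne_zero.2 (Nat.factorial_ne_zero j)
  -- the limit value equality
  have hGval : ((a + 1 : ℕ) : ℝ) * (((a + 1 : ℕ) : ℝ) + 1) *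
      (Real.Gamma ((a + 1 + n : ℕ) : ℝ) * Real.Gamma 3
        / Real.Gamma (((a + 1 + n : ℕ) : ℝ) + 3))
      = ((a + 1 + n - 1).choose (a + 1 - 1) : ℝ) *
        (2 * (((a + 2).factorial : ℝ) * n.factorial / (a + n + 3).factorial)) := by
    rw [hg1, hg2, hg3, hfac1]
    have key : ((a + 1 : ℕ) : ℝ) * (((a + 1 : ℕ) : ℝ) + 1) * (((a + n).factorial : ℝ) * 2)
        = ((a + 1 + n - 1).choose (a + 1 - 1) : ℝ) *
          (2 * (((a : ℝ) + 2) * ((a : ℝ) + 1) * (a.factorial : ℝ) * (n.factorial : ℝ))) := by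
      push_cast at hC ⊢
      linear_combination (-(2 * ((a:ℝ)+2) * ((a:ℝ)+1))) * hC
    calc ((a + 1 : ℕ) : ℝ) * (((a + 1 : ℕ) : ℝ) + 1) *
          (((a + n).factorial : ℝ) * 2 / ((a + n + 3).factorial : ℝ))
        = ((a + 1 : ℕ) : ℝ) * (((a + 1 : ℕ) : ℝ) + 1) * (((a + n).factorial : ℝ) * 2)
            / ((a + n + 3).factorial : ℝ) := by ring
      _ = ((a + 1 + n - 1).choose (a + 1 - 1) : ℝ) *
            (2 * (((a : ℝ) + 2) * ((a : ℝ) + 1) * (a.factorial : ℝ) * (n.factorial : ℝ)))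
            / ((a + n + 3).factorial : ℝ) := by rw [key]
      _ = ((a + 1 + n - 1).choose (a + 1 - 1) : ℝ) *
            (2 * (((a : ℝ) + 2) * ((a : ℝ) + 1) * (a.factorial : ℝ) * (n.factorial : ℝ)
              / ((a + n + 3).factorial : ℝ))) := by ring
  constructor
  · have hkm : a + 1 + n - (a + 1) = n := by omega
    simp only [hkm, intervalIntegral.integral_const_mul]
    rw [hGval]
    obtain ⟨hint, hval⟩ := keyIntegral a n
    have h1 := intervalIntegral_tendsto_integral_Ioi 0 hint tendsto_id
    have h2 : Tendsto (fun T : ℝ => 1 / (1 - Real.exp (-T))) atTop (𝓝 1) := by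
      have he : Tendsto (fun T : ℝ => Real.exp (-T)) atTop (𝓝 0) :=
        Real.tendsto_exp_neg_atTop_nhds_zero
      have hd : Tendsto (fun T : ℝ => 1 - Real.exp (-T)) atTop (𝓝 1) := by
        simpa using tendsto_const_nhds.sub he
      have h5 := Tendsto.div
        (tendsto_const_nhds : Tendsto (fun _ : ℝ => (1:ℝ)) atTop (𝓝 1)) hd one_ne_zero
      simpa [Pi.div_def, one_div] using h5
    have := h2.mul (h1.const_mul (((a + 1 + n - 1).choose (a + 1 - 1) : ℝ)))
    rw [hval] at this
    simpa using this
  · rw [hg1, hg2, hg3, hfac2]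
    have hp1 : ((a : ℝ) + (n : ℝ) + 1) ≠ 0 := by positivity
    have hp2 : ((a : ℝ) + (n : ℝ) + 2) ≠ 0 := by positivity
    have hp3 : ((a : ℝ) + (n : ℝ) + 3) ≠ 0 := by positivity
    have hcast : ((a + 1 + n : ℕ) : ℝ) = (a : ℝ) + (n : ℝ) + 1 := by push_cast; ring
    rw [hcast]
    field_simp
    ring
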